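/- Let ε ∈ [0,1] and let k ≥ 1 be an integer. For t ∈ [0,1], define δ_{k−1}(t) = t and, descending via the recursion (∗), δ_j(t) = δ_{j+1}(t) / (δ_{j+1}(t) + (1−δ_{j+1}(t))·((1−δ_{j+1}(t))/(1−δ_{j+2}(t)))^{ε̄}) for j = k−2, k−3, …, 0 (with the convention δ̄_k := 1). Then the maximum of R_ε over the full cube [0,1]^k equals the maximum over the one-parameter family: max over {(δ₀,…,δ_{k−1}) ∈ [0,1]^k} of R_ε(δ₀,…,δ_{k−1}) = max over {t ∈ [0,1/2]} of R_ε(δ₀(t),…,δ_{k−2}(t), t). -/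

import Mathlib

/-- The binary entropy function (base 2), with `H2 0 = H2 1 = 0`. -/
noncomputable def H2 (x : ℝ) : ℝ := -(x * Real.logb 2 x) - (1 - x) * Real.logb 2 (1 - x)

/-- The function `R_ε(δ₀,…,δ_{k−1})`. -/
noncomputable def Rfun (ε : ℝ) (k : ℕ) (δ : ℕ → ℝ) : ℝ :=
  (∑ i ∈ Finset.range k, (1 - ε) ^ (i + 1) * H2 (δ i) * ∏ m ∈ Finset.range i, δ m) /
  (1 + ∑ i ∈ Finset.range k, (1 - ε) ^ (i + 1) * ∏ m ∈ Finset.range (i + 1), δ m)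

/-- The descending recursion (∗): `chain ε t s` is `δ_{k−1−s}(t)` when the recursion is
started at `δ_{k−1}(t) = t`.  Thus `chain ε t 0 = t`,
`chain ε t 1 = t/(t + (1−t)·((1−t)/1)^{ε̄})` (convention `δ̄_k := 1`), and
`chain ε t (s+2) = b/(b + (1−b)·((1−b)/(1−a))^{ε̄})` where `b = chain ε t (s+1)` and
`a = chain ε t s`. -/
noncomputable def chain (ε t : ℝ) : ℕ → ℝ
  | 0 => t
  | 1 => t / (t + (1 - t) * ((1 - t) / 1) ^ (1 - ε))
  | (s + 2) =>
      chain ε t (s + 1) /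
        (chain ε t (s + 1) + (1 - chain ε t (s + 1)) *
          ((1 - chain ε t (s + 1)) / (1 - chain ε t s)) ^ (1 - ε))


lemma H2_eq (x : ℝ) : H2 x = Real.binEntropy x / Real.log 2 := by
  simp [H2, Real.binEntropy, Real.logb, Real.log_inv]
  ring

lemma log2_pos : (0:ℝ) < Real.log 2 := Real.log_pos (by norm_num)

@[simp] lemma H2_zero : H2 0 = 0 := by simp [H2]
@[simp] lemma H2_one : H2 1 = 0 := by simp [H2]

lemma H2_symm (x : ℝ) : H2 (1 - x) = H2 x := by
  rw [H2_eq, H2_eq, Real.binEntropy_one_sub]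

lemma H2_nonneg {x : ℝ} (h0 : 0 ≤ x) (h1 : x ≤ 1) : 0 ≤ H2 x := by
  rw [H2_eq]
  exact div_nonneg (Real.binEntropy_nonneg h0 h1) log2_pos.le

lemma continuous_H2 : Continuous H2 := by
  simp only [funext H2_eq]
  exact Real.binEntropy_continuous.div_const _

lemma hasDerivAt_H2 {x : ℝ} (h0 : x ≠ 0) (h1 : x ≠ 1) :
    HasDerivAt H2 ((Real.log (1 - x) - Real.log x) / Real.log 2) x := by
  have := (Real.hasDerivAt_binEntropy h0 h1).div_const (Real.log 2)
  simpa [funext H2_eq] using this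

lemma H2_decomp (x : ℝ) :
    H2 x = x * (-Real.log x) / Real.log 2 + (1 - x) * (-Real.log (1 - x)) / Real.log 2 := by
  simp [H2, Real.logb]; ring

lemma H2_ge_left {x : ℝ} (h0 : 0 ≤ x) (h1 : x ≤ 1) :
    x * (-Real.log x) / Real.log 2 ≤ H2 x := by
  rw [H2_decomp]
  have h2 : Real.log (1 - x) ≤ 0 := Real.log_nonpos (by linarith) (by linarith)
  have : 0 ≤ (1 - x) * (-Real.log (1 - x)) / Real.log 2 :=
    div_nonneg (mul_nonneg (by linarith) (by linarith)) log2_pos.le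
  linarith

lemma H2_ge_right {x : ℝ} (h0 : 0 ≤ x) (h1 : x ≤ 1) :
    (1 - x) * (-Real.log (1 - x)) / Real.log 2 ≤ H2 x := by
  rw [H2_decomp]
  have h2 : Real.log x ≤ 0 := Real.log_nonpos h0 h1
  have : 0 ≤ x * (-Real.log x) / Real.log 2 :=
    div_nonneg (mul_nonneg h0 (by linarith)) log2_pos.le
  linarith

/-- `H2 b - b * H2'(b) = -log(1-b)/log 2`. -/
lemma H2_sub_mul {b : ℝ} (hb0 : 0 < b) (hb1 : b < 1) :
    H2 b - b * ((Real.log (1 - b) - Real.log b) / Real.log 2)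
      = -Real.log (1 - b) / Real.log 2 := by
  have hl2 := log2_pos.ne'
  rw [H2]
  simp [Real.logb]
  field_simp
  ring

noncomputable def sA (ε : ℝ) (δ : ℕ → ℝ) (j : ℕ) : ℝ :=
  ∑ i ∈ Finset.range j, (1 - ε) ^ (i + 1) * H2 (δ i) * ∏ m ∈ Finset.range i, δ m
noncomputable def sG (ε : ℝ) (δ : ℕ → ℝ) (j : ℕ) : ℝ :=
  (1 - ε) ^ (j + 1) * ∏ m ∈ Finset.range j, δ m
noncomputable def sB (ε : ℝ) (k : ℕ) (δ : ℕ → ℝ) (j : ℕ) : ℝ :=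
  ∑ i ∈ Finset.Ico (j + 1) k, (1 - ε) ^ (i + 1) * H2 (δ i) * ∏ m ∈ (Finset.range i).erase j, δ m
noncomputable def sE (ε : ℝ) (δ : ℕ → ℝ) (j : ℕ) : ℝ :=
  1 + ∑ i ∈ Finset.range j, (1 - ε) ^ (i + 1) * ∏ m ∈ Finset.range (i + 1), δ m
noncomputable def sC (ε : ℝ) (k : ℕ) (δ : ℕ → ℝ) (j : ℕ) : ℝ :=
  ∑ i ∈ Finset.Ico j k, (1 - ε) ^ (i + 1) * ∏ m ∈ (Finset.range (i + 1)).erase j, δ m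

lemma Rfun_slice (ε : ℝ) (k : ℕ) (δ : ℕ → ℝ) {j : ℕ} (hj : j < k) (s : ℝ) :
    Rfun ε k (Function.update δ j s) =
      (sA ε δ j + sG ε δ j * H2 s + sB ε k δ j * s) / (sE ε δ j + sC ε k δ j * s) := by
  have hsplit : ∀ f : ℕ → ℝ, ∑ i ∈ Finset.range k, f i
      = (∑ i ∈ Finset.range j, f i) + f j + ∑ i ∈ Finset.Ico (j + 1) k, f i := by
    intro f
    rw [Finset.range_eq_Ico, ← Finset.sum_Ico_consecutive _ (Nat.zero_le (j+1)) hj,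
      Finset.sum_Ico_succ_top (Nat.zero_le j), ← Finset.range_eq_Ico]
  have hupne : ∀ i, i ≠ j → Function.update δ j s i = δ i := fun i hi =>
    Function.update_of_ne hi _ _
  have hprod_lt : ∀ i : ℕ, i ≤ j → ∏ m ∈ Finset.range i, Function.update δ j s m
      = ∏ m ∈ Finset.range i, δ m := by
    intro i hi
    exact Finset.prod_congr rfl fun m hm => hupne m (by simp at hm; omega)
  have hprod_gt : ∀ i : ℕ, j < i → ∏ m ∈ Finset.range i, Function.update δ j s m
      = s * ∏ m ∈ (Finset.range i).erase j, δ m := by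
    intro i hi
    rw [Finset.prod_update_of_mem (by simp [hi]), Finset.sdiff_singleton_eq_erase]
  have hnum : ∑ i ∈ Finset.range k, (1 - ε) ^ (i + 1) * H2 (Function.update δ j s i)
        * ∏ m ∈ Finset.range i, Function.update δ j s m
      = sA ε δ j + sG ε δ j * H2 s + sB ε k δ j * s := by
    rw [hsplit]
    congr 1
    · congr 1
      · exact Finset.sum_congr rfl fun i hi => by
          simp at hi
          rw [hupne i (by omega), hprod_lt i (by omega)]
      · rw [Function.update_self, hprod_lt j le_rfl, sG]; ring
    · rw [sB, Finset.sum_mul]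
      refine Finset.sum_congr rfl fun i hi => ?_
      simp only [Finset.mem_Ico] at hi
      rw [hupne i (by omega), hprod_gt i (by omega)]
      ring
  have hden : 1 + ∑ i ∈ Finset.range k, (1 - ε) ^ (i + 1)
        * ∏ m ∈ Finset.range (i + 1), Function.update δ j s m
      = sE ε δ j + sC ε k δ j * s := by
    rw [hsplit]
    have h1 : ∑ i ∈ Finset.range j, (1 - ε) ^ (i + 1)
        * ∏ m ∈ Finset.range (i + 1), Function.update δ j s m
        = ∑ i ∈ Finset.range j, (1 - ε) ^ (i + 1) * ∏ m ∈ Finset.range (i + 1), δ m := by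
      refine Finset.sum_congr rfl fun i hi => ?_
      simp at hi
      rw [hprod_lt (i + 1) (by omega)]
    have h2 : ((1 - ε) ^ (j + 1) * ∏ m ∈ Finset.range (j + 1), Function.update δ j s m)
          + ∑ i ∈ Finset.Ico (j + 1) k, (1 - ε) ^ (i + 1)
            * ∏ m ∈ Finset.range (i + 1), Function.update δ j s m
        = sC ε k δ j * s := by
      rw [sC, Finset.sum_mul, Finset.sum_eq_sum_Ico_succ_bot hj, mul_assoc, mul_comm _ s, ← mul_assoc]
      congr 1
      · rw [hprod_gt (j + 1) (by omega)]; ring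
      · refine Finset.sum_congr rfl fun i hi => ?_
        simp only [Finset.mem_Ico] at hi
        rw [hprod_gt (i + 1) (by omega)]
        ring
    rw [sE, h1]
    linarith [h2]
  rw [Rfun, hnum, hden]

lemma pow_c_nonneg {ε : ℝ} (hε1 : ε ≤ 1) (i : ℕ) : 0 ≤ (1 - ε) ^ (i + 1) :=
  pow_nonneg (by linarith) _

section signs
variable {ε : ℝ} {k : ℕ} {δ : ℕ → ℝ} {j : ℕ}
  (hε1 : ε ≤ 1) (hδ : ∀ i < k, 0 ≤ δ i ∧ δ i ≤ 1)

include hε1 hδ in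
lemma sA_nonneg (hj : j ≤ k) : 0 ≤ sA ε δ j := by
  refine Finset.sum_nonneg fun i hi => ?_
  simp only [Finset.mem_range] at hi
  refine mul_nonneg (mul_nonneg (pow_c_nonneg hε1 i) ?_) (Finset.prod_nonneg fun m hm => ?_)
  · exact H2_nonneg (hδ i (by omega)).1 (hδ i (by omega)).2
  · simp only [Finset.mem_range] at hm; exact (hδ m (by omega)).1

include hε1 hδ in
lemma sB_nonneg : 0 ≤ sB ε k δ j := by
  refine Finset.sum_nonneg fun i hi => ?_
  simp only [Finset.mem_Ico] at hi
  refine mul_nonneg (mul_nonneg (pow_c_nonneg hε1 i) ?_) (Finset.prod_nonneg fun m hm => ?_)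
  · exact H2_nonneg (hδ i (by omega)).1 (hδ i (by omega)).2
  · simp only [Finset.mem_erase, Finset.mem_range] at hm; exact (hδ m (by omega)).1

include hε1 hδ in
lemma sC_nonneg : 0 ≤ sC ε k δ j := by
  refine Finset.sum_nonneg fun i hi => ?_
  simp only [Finset.mem_Ico] at hi
  refine mul_nonneg (pow_c_nonneg hε1 i) (Finset.prod_nonneg fun m hm => ?_)
  simp only [Finset.mem_erase, Finset.mem_range] at hm; exact (hδ m (by omega)).1

include hε1 hδ in
lemma sE_pos (hj : j ≤ k) : 0 < sE ε δ j := by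
  have : 0 ≤ ∑ i ∈ Finset.range j, (1 - ε) ^ (i + 1) * ∏ m ∈ Finset.range (i + 1), δ m := by
    refine Finset.sum_nonneg fun i hi => ?_
    simp only [Finset.mem_range] at hi
    refine mul_nonneg (pow_c_nonneg hε1 i) (Finset.prod_nonneg fun m hm => ?_)
    simp only [Finset.mem_range] at hm; exact (hδ m (by omega)).1
  rw [sE]; linarith

end signs

section recs
variable {ε : ℝ} {k : ℕ} {δ : ℕ → ℝ} {j : ℕ}

lemma sB_rec (hjk : j + 1 < k) :
    δ j * sB ε k δ j
      = (1 - ε) ^ (j + 2) * H2 (δ (j + 1)) * ∏ m ∈ Finset.range (j + 1), δ m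
        + δ (j + 1) * sB ε k δ (j + 1) := by
  have key : ∀ (l : ℕ), ∀ i, l < i →
      δ l * ((1 - ε) ^ (i + 1) * H2 (δ i) * ∏ m ∈ (Finset.range i).erase l, δ m)
      = (1 - ε) ^ (i + 1) * H2 (δ i) * ∏ m ∈ Finset.range i, δ m := by
    intro l i hi
    rw [← Finset.mul_prod_erase (Finset.range i) δ (Finset.mem_range.mpr hi)]
    ring
  rw [sB, sB, Finset.mul_sum, Finset.mul_sum]
  have h1 : ∀ i ∈ Finset.Ico (j + 1) k,
      δ j * ((1 - ε) ^ (i + 1) * H2 (δ i) * ∏ m ∈ (Finset.range i).erase j, δ m)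
      = (1 - ε) ^ (i + 1) * H2 (δ i) * ∏ m ∈ Finset.range i, δ m := by
    intro i hi; simp only [Finset.mem_Ico] at hi; exact key j i (by omega)
  have h2 : ∀ i ∈ Finset.Ico (j + 2) k,
      δ (j + 1) * ((1 - ε) ^ (i + 1) * H2 (δ i) * ∏ m ∈ (Finset.range i).erase (j + 1), δ m)
      = (1 - ε) ^ (i + 1) * H2 (δ i) * ∏ m ∈ Finset.range i, δ m := by
    intro i hi; simp only [Finset.mem_Ico] at hi; exact key (j + 1) i (by omega)
  rw [Finset.sum_congr rfl h1, Finset.sum_congr rfl h2,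
    Finset.sum_eq_sum_Ico_succ_bot hjk]

lemma sC_rec (hjk : j + 1 < k) :
    δ j * sC ε k δ j
      = (1 - ε) ^ (j + 1) * ∏ m ∈ Finset.range (j + 1), δ m
        + δ (j + 1) * sC ε k δ (j + 1) := by
  have key : ∀ (l : ℕ), ∀ i, l ≤ i →
      δ l * ((1 - ε) ^ (i + 1) * ∏ m ∈ (Finset.range (i + 1)).erase l, δ m)
      = (1 - ε) ^ (i + 1) * ∏ m ∈ Finset.range (i + 1), δ m := by
    intro l i hi
    rw [← Finset.mul_prod_erase (Finset.range (i + 1)) δ (Finset.mem_range.mpr (Nat.lt_succ_of_le hi))]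
    ring
  rw [sC, sC, Finset.mul_sum, Finset.mul_sum]
  have h1 : ∀ i ∈ Finset.Ico j k,
      δ j * ((1 - ε) ^ (i + 1) * ∏ m ∈ (Finset.range (i + 1)).erase j, δ m)
      = (1 - ε) ^ (i + 1) * ∏ m ∈ Finset.range (i + 1), δ m := by
    intro i hi; simp only [Finset.mem_Ico] at hi; exact key j i (by omega)
  have h2 : ∀ i ∈ Finset.Ico (j + 1) k,
      δ (j + 1) * ((1 - ε) ^ (i + 1) * ∏ m ∈ (Finset.range (i + 1)).erase (j + 1), δ m)
      = (1 - ε) ^ (i + 1) * ∏ m ∈ Finset.range (i + 1), δ m := by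
    intro i hi; simp only [Finset.mem_Ico] at hi; exact key (j + 1) i (by omega)
  rw [Finset.sum_congr rfl h1, Finset.sum_congr rfl h2,
    Finset.sum_eq_sum_Ico_succ_bot (by omega : j < k)]

lemma sB_last (hk : 1 ≤ k) : sB ε k δ (k - 1) = 0 := by
  obtain ⟨n, rfl⟩ : ∃ n, k = n + 1 := ⟨k - 1, by omega⟩
  simp [sB]

lemma sC_last (hk : 1 ≤ k) :
    sC ε k δ (k - 1) = (1 - ε) ^ k * ∏ m ∈ Finset.range (k - 1), δ m := by
  obtain ⟨n, rfl⟩ : ∃ n, k = n + 1 := ⟨k - 1, by omega⟩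
  simp only [Nat.add_sub_cancel, sC]
  have h1 : Finset.Ico n (n + 1) = {n} := by
    ext x; simp
  rw [h1, Finset.sum_singleton, Finset.range_add_one, Finset.erase_insert (by simp)]

end recs

lemma den_pos {E C : ℝ} (hE : 0 < E) (hEC : 0 < E + C) {s : ℝ} (h0 : 0 ≤ s) (h1 : s ≤ 1) :
    0 < E + C * s := by
  have h : E + C * s = (1 - s) * E + s * (E + C) := by ring
  nlinarith [mul_nonneg h0 hEC.le, mul_nonneg (by linarith : (0:ℝ) ≤ 1 - s) hE.le]

/-- Escape from `s = 0`. -/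
lemma exists_gt_at_zero (A B C E G : ℝ) (hG : 0 < G) (hE : 0 < E) (hEC : 0 < E + C) :
    ∃ s ∈ Set.Ioo (0:ℝ) 1,
      (A + G * H2 0 + B * 0) / (E + C * 0) < (A + G * H2 s + B * s) / (E + C * s) := by
  set K : ℝ := max 0 ((A * C - B * E) / (G * E)) with hK
  have hK0 : 0 ≤ K := le_max_left _ _
  set s : ℝ := Real.exp (-(K * Real.log 2 + 1)) with hs
  have hs0 : 0 < s := Real.exp_pos _
  have hs1 : s < 1 := by
    rw [hs, Real.exp_lt_one_iff]
    nlinarith [log2_pos]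
  refine ⟨s, ⟨hs0, hs1⟩, ?_⟩
  rw [H2_zero]
  have hD : 0 < E + C * s := den_pos hE hEC hs0.le hs1.le
  rw [div_lt_div_iff₀ (by simpa using hE) hD]
  have hlog : -Real.log s = K * Real.log 2 + 1 := by rw [hs, Real.log_exp]; ring
  have hH2 : s * (K * Real.log 2 + 1) / Real.log 2 ≤ H2 s := by
    have := H2_ge_left hs0.le hs1.le
    rwa [hlog] at this
  have hKge : (A * C - B * E) ≤ K * (G * E) := by
    have hprod : 0 < G * E := mul_pos hG hE
    rcases le_or_gt ((A * C - B * E) / (G * E)) 0 with h | h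
    · have h2 : A * C - B * E ≤ 0 := by
        by_contra hc; push_neg at hc
        have := div_pos hc hprod; linarith
      nlinarith [mul_nonneg hK0 hprod.le]
    · have : (A * C - B * E) / (G * E) ≤ K := le_max_right _ _
      calc A * C - B * E = (A * C - B * E) / (G * E) * (G * E) := by
            field_simp
        _ ≤ K * (G * E) := by nlinarith [mul_pos hG hE]
  -- Goal: (A + G*H2 0' ...)*D < N*E  i.e. A*(E+Cs) < (A + G H2 s + B s)*E
  have key : G * E * H2 s ≥ G * E * (s * (K * Real.log 2 + 1) / Real.log 2) := by
    nlinarith [mul_pos hG hE]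
  have expand : G * E * (s * (K * Real.log 2 + 1) / Real.log 2)
      = s * (G * E * K) + s * (G * E / Real.log 2) := by
    field_simp [log2_pos.ne']
  nlinarith [mul_pos hs0 (div_pos (mul_pos hG hE) log2_pos)]

/-- Escape from `s = 1`. -/
lemma exists_gt_at_one (A B C E G : ℝ) (hG : 0 < G) (hE : 0 < E) (hEC : 0 < E + C) :
    ∃ s ∈ Set.Ioo (0:ℝ) 1,
      (A + G * H2 1 + B * 1) / (E + C * 1) < (A + G * H2 s + B * s) / (E + C * s) := by
  obtain ⟨u, hu, hlt⟩ := exists_gt_at_zero (A + B) (-B) (-C) (E + C) G hG hEC (by simpa using hE)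
  refine ⟨1 - u, ⟨by linarith [hu.2], by linarith [hu.1]⟩, ?_⟩
  have e1 : A + B + G * H2 0 + -B * 0 = A + G * H2 1 + B * 1 := by
    rw [H2_zero, H2_one]; ring
  have e2 : E + C + -C * 0 = E + C * 1 := by ring
  have e3 : A + B + G * H2 u + -B * u = A + G * H2 (1 - u) + B * (1 - u) := by
    rw [H2_symm u]; ring
  have e4 : E + C + -C * u = E + C * (1 - u) := by ring
  rwa [e1, e2, e3, e4] at hlt

/-- At an interior max of `s ↦ (A + G·H2 s + B·s)/(E + C·s)` on `[0,1]`,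
the first-order condition holds. -/
lemma slice_crit {A B C E G x : ℝ} (hx0 : 0 < x) (hx1 : x < 1)
    (hD : E + C * x ≠ 0)
    (hmax : ∀ s ∈ Set.Icc (0:ℝ) 1,
      (A + G * H2 s + B * s) / (E + C * s) ≤ (A + G * H2 x + B * x) / (E + C * x)) :
    G * ((Real.log (1 - x) - Real.log x) / Real.log 2) + B
      = ((A + G * H2 x + B * x) / (E + C * x)) * C := by
  set φ : ℝ → ℝ := fun s => (A + G * H2 s + B * s) / (E + C * s) with hφ
  have hnum : HasDerivAt (fun s => A + G * H2 s + B * s)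
      (G * ((Real.log (1 - x) - Real.log x) / Real.log 2) + B) x := by
    have h1 := (hasDerivAt_H2 hx0.ne' (by linarith : x ≠ 1)).const_mul G
    have h2 : HasDerivAt (fun s : ℝ => B * s) B x := by
      simpa using (hasDerivAt_id x).const_mul B
    exact (h1.const_add A).add h2
  have hden : HasDerivAt (fun s => E + C * s) C x := by
    simpa using ((hasDerivAt_id x).const_mul C).const_add E
  have hder : HasDerivAt φ
      (((G * ((Real.log (1 - x) - Real.log x) / Real.log 2) + B) * (E + C * x)
        - (A + G * H2 x + B * x) * C) / (E + C * x) ^ 2) x := hnum.div hden hD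
  have hloc : IsLocalMax φ x := by
    have : Set.Icc (0:ℝ) 1 ∈ nhds x := Icc_mem_nhds hx0 hx1
    exact IsMaxOn.isLocalMax (fun s hs => hmax s hs) this
  have h0 : ((G * ((Real.log (1 - x) - Real.log x) / Real.log 2) + B) * (E + C * x)
      - (A + G * H2 x + B * x) * C) / (E + C * x) ^ 2 = 0 := by
    rw [← hder.deriv]; exact hloc.deriv_eq_zero
  have h1 : (G * ((Real.log (1 - x) - Real.log x) / Real.log 2) + B) * (E + C * x)
      = (A + G * H2 x + B * x) * C := by
    have := div_eq_zero_iff.mp h0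
    rcases this with h | h
    · linarith [sub_eq_zero.mp (by linarith : _ = (0:ℝ))]
    · exact absurd h (pow_ne_zero 2 hD)
  rw [div_mul_eq_mul_div, eq_div_iff hD]
  linear_combination h1

lemma Rfun_congr {ε : ℝ} {k : ℕ} {δ δ' : ℕ → ℝ} (h : ∀ i < k, δ i = δ' i) :
    Rfun ε k δ = Rfun ε k δ' := by
  rw [Rfun, Rfun]
  congr 1
  · refine Finset.sum_congr rfl fun i hi => ?_
    simp only [Finset.mem_range] at hi
    rw [h i hi]
    congr 1
    exact Finset.prod_congr rfl fun m hm => h m (by simp at hm; omega)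
  · congr 1
    refine Finset.sum_congr rfl fun i hi => ?_
    simp only [Finset.mem_range] at hi
    congr 1
    exact Finset.prod_congr rfl fun m hm => h m (by simp at hm; omega)

lemma Rfun_zero_fn (ε : ℝ) (k : ℕ) {δ : ℕ → ℝ} (h : ∀ i < k, δ i = 0) :
    Rfun ε k δ = 0 := by
  rw [Rfun]
  have : ∀ i ∈ Finset.range k,
      (1 - ε) ^ (i + 1) * H2 (δ i) * ∏ m ∈ Finset.range i, δ m = 0 := by
    intro i hi
    simp only [Finset.mem_range] at hi
    rw [h i hi, H2_zero]
    ring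
  rw [Finset.sum_congr rfl this, Finset.sum_const_zero, zero_div]

@[simp] lemma chain_zero_t (ε : ℝ) : ∀ s, chain ε 0 s = 0
  | 0 => rfl
  | 1 => by simp [chain]
  | (s + 2) => by rw [chain, chain_zero_t ε (s + 1), zero_div]

lemma chain_mem {ε t : ℝ} (ht0 : 0 ≤ t) (ht1 : t < 1) :
    ∀ s, 0 ≤ chain ε t s ∧ chain ε t s < 1 := by
  have step : ∀ a b : ℝ, 0 ≤ b → b < 1 → a < 1 →
      0 ≤ b / (b + (1 - b) * ((1 - b) / (1 - a)) ^ (1 - ε)) ∧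
      b / (b + (1 - b) * ((1 - b) / (1 - a)) ^ (1 - ε)) < 1 := by
    intro a b hb0 hb1 ha1
    have hw : (0:ℝ) < (1 - b) / (1 - a) := div_pos (by linarith) (by linarith)
    have hx : (0:ℝ) < ((1 - b) / (1 - a)) ^ (1 - ε) := Real.rpow_pos_of_pos hw _
    have hden : 0 < b + (1 - b) * ((1 - b) / (1 - a)) ^ (1 - ε) := by nlinarith
    constructor
    · positivity
    · rw [div_lt_one hden]; nlinarith
  intro s
  induction s using Nat.strong_induction_on with
  | _ s ih =>
    match s with
    | 0 => exact ⟨ht0, ht1⟩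
    | 1 =>
      have := step 0 t ht0 ht1 (by norm_num)
      simpa [chain, sub_zero] using this
    | (s + 2) =>
      have hb := ih (s + 1) (by omega)
      have ha := ih s (by omega)
      have := step (chain ε t s) (chain ε t (s + 1)) hb.1 hb.2 ha.2
      rw [chain]
      exact this

/-- Inversion of the first-order relation into the explicit recursion formula. -/
lemma inv_step {x b w c : ℝ} (hx0 : 0 < x) (hx1 : x < 1) (hb0 : 0 < b) (hb1 : b < 1)
    (hw : 0 < w)
    (h : Real.log (1 - x) - Real.log x = Real.log (1 - b) - Real.log b + c * Real.log w) :
    x = b / (b + (1 - b) * w ^ c) := by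
  have hwc : (0:ℝ) < w ^ c := Real.rpow_pos_of_pos hw _
  have hlog : Real.log ((1 - x) * b) = Real.log (x * ((1 - b) * w ^ c)) := by
    rw [Real.log_mul (by linarith) (by linarith),
        Real.log_mul hx0.ne' (mul_pos (by linarith : (0:ℝ) < 1 - b) hwc).ne',
        Real.log_mul (by linarith : (1:ℝ) - b ≠ 0) hwc.ne',
        Real.log_rpow hw]
    linarith
  have heq : (1 - x) * b = x * ((1 - b) * w ^ c) :=
    Real.log_injOn_pos (Set.mem_Ioi.mpr (by nlinarith)) (Set.mem_Ioi.mpr (mul_pos hx0 (mul_pos (by linarith) hwc))) hlog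
  have hden : 0 < b + (1 - b) * w ^ c := by nlinarith
  rw [eq_div_iff hden.ne']
  nlinarith

/-- Extension of a `Fin k` vector to `ℕ → ℝ` by zero. -/
def ext (k : ℕ) (v : Fin k → ℝ) : ℕ → ℝ := fun i => if h : i < k then v ⟨i, h⟩ else 0

lemma exists_maximizer (ε : ℝ) (hε1 : ε ≤ 1) (k : ℕ) :
    ∃ δ0 : ℕ → ℝ, (∀ i < k, δ0 i ∈ Set.Icc (0:ℝ) 1) ∧
      IsGreatest {r : ℝ | ∃ δ : ℕ → ℝ,
        (∀ i < k, δ i ∈ Set.Icc (0 : ℝ) 1) ∧ r = Rfun ε k δ} (Rfun ε k δ0) := by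
  set K : Set (Fin k → ℝ) := Set.univ.pi fun _ => Set.Icc (0:ℝ) 1 with hKdef
  have hKc : IsCompact K := isCompact_univ_pi fun _ => isCompact_Icc
  have hKne : K.Nonempty := ⟨fun _ => 0, fun i _ => Set.mem_Icc.mpr ⟨le_rfl, zero_le_one⟩⟩
  set g : (Fin k → ℝ) → ℝ := fun v => Rfun ε k (ext k v) with hg
  have hcont : ContinuousOn g K := by
    have hext : ∀ i : ℕ, Continuous fun v : Fin k → ℝ => ext k v i := by
      intro i
      by_cases h : i < k
      · simpa [ext, h] using continuous_apply (⟨i, h⟩ : Fin k)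
      · simpa [ext, h] using continuous_const
    have hnum : Continuous fun v : Fin k → ℝ =>
        ∑ i ∈ Finset.range k, (1 - ε) ^ (i + 1) * H2 (ext k v i)
          * ∏ m ∈ Finset.range i, ext k v m := by
      refine continuous_finset_sum _ fun i _ => ?_
      exact (continuous_const.mul (continuous_H2.comp (hext i))).mul
        (continuous_finset_prod _ fun m _ => hext m)
    have hden : Continuous fun v : Fin k → ℝ =>
        1 + ∑ i ∈ Finset.range k, (1 - ε) ^ (i + 1)
          * ∏ m ∈ Finset.range (i + 1), ext k v m := by
      refine continuous_const.add (continuous_finset_sum _ fun i _ => ?_)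
      exact continuous_const.mul (continuous_finset_prod _ fun m _ => hext m)
    have hden_ne : ∀ v ∈ K, (1 + ∑ i ∈ Finset.range k, (1 - ε) ^ (i + 1)
        * ∏ m ∈ Finset.range (i + 1), ext k v m) ≠ 0 := by
      intro v hv
      have : 0 ≤ ∑ i ∈ Finset.range k, (1 - ε) ^ (i + 1)
          * ∏ m ∈ Finset.range (i + 1), ext k v m := by
        refine Finset.sum_nonneg fun i hi => ?_
        refine mul_nonneg (pow_nonneg (by linarith) _)
          (Finset.prod_nonneg fun m hm => ?_)
        simp only [Finset.mem_range] at hi hm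
        have hmk : m < k := by omega
        have := hv ⟨m, hmk⟩ (Set.mem_univ _)
        simpa [ext, hmk] using this.1
      positivity
    exact (hnum.continuousOn).div (hden.continuousOn) hden_ne
  obtain ⟨v0, hv0K, hmax⟩ := hKc.exists_isMaxOn hKne hcont
  refine ⟨ext k v0, ?_, ?_, ?_⟩
  · intro i hi
    have := hv0K ⟨i, hi⟩ (Set.mem_univ _)
    simpa [ext, hi] using this
  · exact ⟨ext k v0, fun i hi => by
      simpa [ext, hi] using hv0K ⟨i, hi⟩ (Set.mem_univ _), rfl⟩
  · rintro r ⟨δ, hδ, rfl⟩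
    set v : Fin k → ℝ := fun i => δ i.val with hv
    have hvK : v ∈ K := fun i _ => hδ i.val i.isLt
    have : Rfun ε k δ = g v := by
      refine Rfun_congr fun i hi => ?_
      simp [hv, ext, hi]
    rw [this]
    exact hmax hvK

lemma Rfun_eps_one (k : ℕ) (δ : ℕ → ℝ) : Rfun 1 k δ = 0 := by
  rw [Rfun]
  have : ∀ i ∈ Finset.range k,
      (1 - (1:ℝ)) ^ (i + 1) * H2 (δ i) * ∏ m ∈ Finset.range i, δ m = 0 := by
    intro i _
    rw [sub_self, zero_pow (Nat.succ_ne_zero i)]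
    ring
  rw [Finset.sum_congr rfl this, Finset.sum_const_zero, zero_div]

/-- Let `ε ∈ [0,1]` and `k ≥ 1`.  For `t ∈ [0,1]` define `δ_{k−1}(t) = t` and obtain
`δ_{k−2}(t),…,δ₀(t)` by descending along the recursion (∗) (so `δ_j(t) = chain ε t (k−1−j)`).
Then the maximum of `R_ε` over the full cube `[0,1]^k` equals its maximum over the
one-parameter family `{(δ₀(t),…,δ_{k−2}(t), t) : t ∈ [0,1/2]}`. -/
theorem max_cube_eq_max_one_parameter_family
    (ε : ℝ) (hε : ε ∈ Set.Icc (0 : ℝ) 1) (k : ℕ) (hk : 1 ≤ k) :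
    ∃ M : ℝ,
      IsGreatest {r : ℝ | ∃ δ : ℕ → ℝ,
        (∀ i < k, δ i ∈ Set.Icc (0 : ℝ) 1) ∧ r = Rfun ε k δ} M ∧
      IsGreatest {r : ℝ | ∃ t ∈ Set.Icc (0 : ℝ) (1 / 2),
        r = Rfun ε k (fun j => chain ε t (k - 1 - j))} M := by
  obtain ⟨hε0, hε1⟩ := hε
  set S1 : Set ℝ := {r : ℝ | ∃ δ : ℕ → ℝ,
      (∀ i < k, δ i ∈ Set.Icc (0 : ℝ) 1) ∧ r = Rfun ε k δ} with hS1
  set S2 : Set ℝ := {r : ℝ | ∃ t ∈ Set.Icc (0 : ℝ) (1 / 2),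
      r = Rfun ε k (fun j => chain ε t (k - 1 - j))} with hS2
  -- the case ε = 1 : everything is zero
  by_cases hεone : ε = 1
  · subst hεone
    refine ⟨0, ⟨⟨fun _ => 0, fun i _ => ⟨le_rfl, zero_le_one⟩, (Rfun_eps_one k _).symm⟩, ?_⟩,
      ⟨⟨0, ⟨le_rfl, by norm_num⟩, (Rfun_eps_one k _).symm⟩, ?_⟩⟩
    · rintro r ⟨δ, -, rfl⟩
      rw [Rfun_eps_one]
    · rintro r ⟨t, -, rfl⟩
      rw [Rfun_eps_one]
  have hc : 0 < 1 - ε := by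
    rcases lt_or_eq_of_le hε1 with h | h
    · linarith
    · exact absurd h hεone
  -- maximizer over the cube
  obtain ⟨δ0, hδ0mem, hgr⟩ := exists_maximizer ε hε1 k
  set M : ℝ := Rfun ε k δ0 with hM
  have hδ01 : ∀ i < k, 0 ≤ δ0 i ∧ δ0 i ≤ 1 := fun i hi => hδ0mem i hi
  have hM0 : 0 ≤ M := by
    refine hgr.2 ⟨fun _ => 0, fun i _ => ⟨le_rfl, zero_le_one⟩, ?_⟩
    rw [Rfun_zero_fn ε k (fun i _ => rfl)]
  -- the one-parameter family is inside the cube family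
  have hS2sub : ∀ r ∈ S2, r ≤ M := by
    rintro r ⟨t, ⟨ht0, ht2⟩, rfl⟩
    refine hgr.2 ⟨_, fun i _ => ?_, rfl⟩
    have := chain_mem (ε := ε) ht0 (by linarith : t < 1) (k - 1 - i)
    exact ⟨this.1, this.2.le⟩
  refine ⟨M, hgr, ?_, hS2sub⟩
  -- membership of M in the family set
  rcases eq_or_lt_of_le hM0 with hMeq | hMpos
  · -- M = 0 : realized at t = 0
    refine ⟨0, ⟨le_rfl, by norm_num⟩, ?_⟩
    rw [← hMeq, Rfun_zero_fn ε k (fun i _ => chain_zero_t ε _)]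
  -- M > 0 : the maximizer is interior and lies on the family
  have hupmem : ∀ j < k, ∀ s ∈ Set.Icc (0:ℝ) 1, Rfun ε k (Function.update δ0 j s) ≤ M := by
    intro j hj s hs
    refine hgr.2 ⟨_, fun i hi => ?_, rfl⟩
    by_cases hij : i = j
    · subst hij; rw [Function.update_self]; exact hs
    · rw [Function.update_of_ne hij]; exact hδ0mem i hi
  have hint : ∀ j < k, 0 < δ0 j ∧ δ0 j < 1 := by
    intro j
    induction j using Nat.strong_induction_on with
    | _ j ih =>
      intro hjk
      have hP : 0 < ∏ m ∈ Finset.range j, δ0 m := by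
        refine Finset.prod_pos fun m hm => ?_
        simp only [Finset.mem_range] at hm
        exact (ih m hm (by omega)).1
      have hG : 0 < sG ε δ0 j := mul_pos (pow_pos hc _) hP
      have hE : 0 < sE ε δ0 j := sE_pos hε1 hδ01 (le_of_lt hjk)
      have hCn : 0 ≤ sC ε k δ0 j := sC_nonneg hε1 hδ01
      have hEC : 0 < sE ε δ0 j + sC ε k δ0 j := by linarith
      obtain ⟨h0, h1⟩ := hδ01 j hjk
      rcases lt_or_eq_of_le h0 with h0' | h0'
      · rcases lt_or_eq_of_le h1 with h1' | h1'
        · exact ⟨h0', h1'⟩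
        · -- δ0 j = 1 : contradiction
          exfalso
          obtain ⟨s, hs, hlt⟩ := exists_gt_at_one (sA ε δ0 j) (sB ε k δ0 j)
            (sC ε k δ0 j) (sE ε δ0 j) (sG ε δ0 j) hG hE hEC
          rw [← Rfun_slice ε k δ0 hjk 1, ← Rfun_slice ε k δ0 hjk s] at hlt
          rw [← h1', Function.update_eq_self] at hlt
          exact absurd (hupmem j hjk s ⟨hs.1.le, hs.2.le⟩) (not_le.mpr hlt)
      · -- δ0 j = 0 : contradiction
        exfalso
        obtain ⟨s, hs, hlt⟩ := exists_gt_at_zero (sA ε δ0 j) (sB ε k δ0 j)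
          (sC ε k δ0 j) (sE ε δ0 j) (sG ε δ0 j) hG hE hEC
        rw [← Rfun_slice ε k δ0 hjk 0, ← Rfun_slice ε k δ0 hjk s] at hlt
        rw [h0', Function.update_eq_self] at hlt
        exact absurd (hupmem j hjk s ⟨hs.1.le, hs.2.le⟩) (not_le.mpr hlt)
  -- first-order conditions
  have hEq : ∀ j, j < k →
      sG ε δ0 j * ((Real.log (1 - δ0 j) - Real.log (δ0 j)) / Real.log 2) + sB ε k δ0 j
        = M * sC ε k δ0 j := by
    intro j hjk
    have hx := hint j hjk
    have hE := sE_pos hε1 hδ01 (le_of_lt hjk) (ε := ε)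
    have hCn : 0 ≤ sC ε k δ0 j := sC_nonneg hε1 hδ01
    have hD : sE ε δ0 j + sC ε k δ0 j * δ0 j ≠ 0 := by
      have : 0 ≤ sC ε k δ0 j * δ0 j := mul_nonneg hCn hx.1.le
      positivity
    have hmax : ∀ s ∈ Set.Icc (0:ℝ) 1,
        (sA ε δ0 j + sG ε δ0 j * H2 s + sB ε k δ0 j * s)
            / (sE ε δ0 j + sC ε k δ0 j * s)
          ≤ (sA ε δ0 j + sG ε δ0 j * H2 (δ0 j) + sB ε k δ0 j * δ0 j)
            / (sE ε δ0 j + sC ε k δ0 j * δ0 j) := by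
      intro s hs
      rw [← Rfun_slice ε k δ0 hjk s, ← Rfun_slice ε k δ0 hjk (δ0 j),
        Function.update_eq_self]
      exact hupmem j hjk s hs
    have := slice_crit hx.1 hx.2 hD hmax
    rw [← Rfun_slice ε k δ0 hjk (δ0 j), Function.update_eq_self] at this
    exact this
  -- the relation at the top index
  have hLlast : (Real.log (1 - δ0 (k-1)) - Real.log (δ0 (k-1))) / Real.log 2 = M := by
    have h := hEq (k-1) (by omega)
    rw [sB_last hk, sC_last hk, add_zero] at h
    have hsGlast : sG ε δ0 (k-1) = (1-ε)^k * ∏ m ∈ Finset.range (k-1), δ0 m := by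
      rw [sG, show k - 1 + 1 = k by omega]
    rw [hsGlast] at h
    have hX : (0:ℝ) < (1-ε)^k * ∏ m ∈ Finset.range (k-1), δ0 m := by
      refine mul_pos (pow_pos hc _) (Finset.prod_pos fun m hm => ?_)
      simp only [Finset.mem_range] at hm
      exact (hint m (by omega)).1
    have h2 : ((1-ε)^k * ∏ m ∈ Finset.range (k-1), δ0 m)
          * ((Real.log (1 - δ0 (k-1)) - Real.log (δ0 (k-1))) / Real.log 2)
        = ((1-ε)^k * ∏ m ∈ Finset.range (k-1), δ0 m) * M := by
      linear_combination h
    exact mul_left_cancel₀ hX.ne' h2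
  -- the relations at lower indices
  have hRel : ∀ j, j + 1 < k →
      (Real.log (1 - δ0 j) - Real.log (δ0 j)) / Real.log 2
        = M + (1 - ε) * (Real.log (1 - δ0 (j+1)) / Real.log 2) := by
    intro j hjk
    set P1 := ∏ m ∈ Finset.range (j+1), δ0 m with hP1def
    have hP1 : 0 < P1 := by
      refine Finset.prod_pos fun m hm => ?_
      simp only [Finset.mem_range] at hm
      exact (hint m (by omega)).1
    have e1 := hEq j (by omega)
    have e2 := hEq (j+1) hjk
    have hprod : δ0 j * sG ε δ0 j = (1-ε)^(j+1) * P1 := by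
      rw [sG, hP1def, Finset.prod_range_succ]; ring
    have hsG1 : sG ε δ0 (j+1) = (1-ε)^(j+2) * P1 := by
      rw [sG, hP1def]
    have hBr := sB_rec (ε := ε) (δ := δ0) hjk
    have hCr := sC_rec (ε := ε) (δ := δ0) hjk
    rw [← hP1def] at hBr hCr
    -- subtracted relation
    have E1 : (1-ε)^(j+1) * P1 * ((Real.log (1 - δ0 j) - Real.log (δ0 j)) / Real.log 2)
        + δ0 j * sB ε k δ0 j = M * (δ0 j * sC ε k δ0 j) := by
      linear_combination (δ0 j) * e1
        - ((Real.log (1 - δ0 j) - Real.log (δ0 j)) / Real.log 2) * hprod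
    rw [hBr, hCr] at E1
    have E2 : (1-ε)^(j+2) * P1
          * (δ0 (j+1) * ((Real.log (1 - δ0 (j+1)) - Real.log (δ0 (j+1))) / Real.log 2))
        + δ0 (j+1) * sB ε k δ0 (j+1) = M * (δ0 (j+1) * sC ε k δ0 (j+1)) := by
      linear_combination (δ0 (j+1)) * e2
        - (δ0 (j+1) * ((Real.log (1 - δ0 (j+1)) - Real.log (δ0 (j+1))) / Real.log 2)) * hsG1
    have key : (1-ε)^(j+1) * P1 * ((Real.log (1 - δ0 j) - Real.log (δ0 j)) / Real.log 2)
        + (1-ε)^(j+2) * P1 * H2 (δ0 (j+1))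
        - (1-ε)^(j+2) * P1
          * (δ0 (j+1) * ((Real.log (1 - δ0 (j+1)) - Real.log (δ0 (j+1))) / Real.log 2))
        = M * ((1-ε)^(j+1) * P1) := by
      linear_combination E1 - E2
    have hcanc : (Real.log (1 - δ0 j) - Real.log (δ0 j)) / Real.log 2
        + (1-ε) * H2 (δ0 (j+1))
        - (1-ε) * (δ0 (j+1) * ((Real.log (1 - δ0 (j+1)) - Real.log (δ0 (j+1))) / Real.log 2))
        = M := by
      have hX : ((1-ε)^(j+1) * P1) ≠ 0 := (mul_pos (pow_pos hc _) hP1).ne'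
      refine mul_left_cancel₀ hX ?_
      linear_combination key
    have hsub := H2_sub_mul (hint (j+1) hjk).1 (hint (j+1) hjk).2
    linear_combination hcanc - (1-ε) * hsub
  -- identify the maximizer with the chain
  set t := δ0 (k-1) with ht
  have htint := hint (k-1) (by omega)
  have hchain : ∀ s, s ≤ k - 1 → δ0 (k - 1 - s) = chain ε t s := by
    intro s
    induction s using Nat.strong_induction_on with
    | _ s ih =>
      intro hsk
      match s with
      | 0 => rfl
      | 1 =>
        have hk2 : 2 ≤ k := by omega
        have hj : k - 1 - 1 + 1 = k - 1 := by omega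
        have hrel := hRel (k - 1 - 1) (by omega)
        rw [hj] at hrel
        have hx := hint (k - 1 - 1) (by omega)
        have hw : (0:ℝ) < (1 - t) / 1 := by
          rw [div_one]; linarith [htint.2]
        have harg : Real.log (1 - δ0 (k-1-1)) - Real.log (δ0 (k-1-1))
            = Real.log (1 - t) - Real.log t + (1 - ε) * Real.log ((1 - t)/1) := by
          rw [div_one]
          have h1 := hrel
          rw [← hLlast] at h1
          field_simp [log2_pos.ne'] at h1
          linarith [h1]
        have := inv_step hx.1 hx.2 htint.1 htint.2 hw harg
        rw [this]
        rfl
      | (s + 2) =>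
        have hb := ih (s + 1) (by omega) (by omega)
        have ha := ih s (by omega) (by omega)
        have hj1 : k - 1 - (s + 2) + 1 = k - 1 - (s + 1) := by omega
        have hj2 : k - 1 - (s + 1) + 1 = k - 1 - s := by omega
        set j := k - 1 - (s + 2) with hjdef
        have hrel1 := hRel j (by omega)
        have hrel2 := hRel (j + 1) (by omega)
        rw [hj1] at hrel1
        rw [hj1, hj2] at hrel2
        have hxj := hint j (by omega)
        have hxb := hint (k - 1 - (s+1)) (by omega)
        have hxa := hint (k - 1 - s) (by omega)
        have hw : (0:ℝ) < (1 - δ0 (k-1-(s+1))) / (1 - δ0 (k-1-s)) :=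
          div_pos (by linarith [hxb.2]) (by linarith [hxa.2])
        have harg : Real.log (1 - δ0 j) - Real.log (δ0 j)
            = Real.log (1 - δ0 (k-1-(s+1))) - Real.log (δ0 (k-1-(s+1)))
              + (1 - ε) * Real.log ((1 - δ0 (k-1-(s+1))) / (1 - δ0 (k-1-s))) := by
          rw [Real.log_div (by linarith [hxb.2]) (by linarith [hxa.2])]
          have h1 := hrel1
          have h2 := hrel2
          field_simp [log2_pos.ne'] at h1 h2 ⊢
          linarith [h1, h2]
        have := inv_step hxj.1 hxj.2 hxb.1 hxb.2 hw harg
        rw [this, chain, ← hb, ← ha]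
  -- conclude
  have ht12 : t ≤ 1 / 2 := by
    have hlog : 0 < Real.log (1 - t) - Real.log t := by
      have h := hLlast
      rw [div_eq_iff log2_pos.ne'] at h
      rw [h]
      exact mul_pos hMpos log2_pos
    by_contra hcon
    push_neg at hcon
    have : Real.log (1 - t) ≤ Real.log t :=
      Real.log_le_log (by linarith [htint.2]) (by linarith)
    linarith
  refine ⟨t, ⟨htint.1.le, ht12⟩, ?_⟩
  refine Rfun_congr fun i hi => ?_
  have hs : k - 1 - (k - 1 - i) = i := by omega
  have := hchain (k - 1 - i) (by omega)
  rw [hs] at this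
  exact this
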